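/- Let A > 1 and m, n ≥ 1 be integers. Then P(A^m + 1) = P(A^n - 1) if and only if one of the following holds: (i) m = 1, n = 1, A = 3; (ii) m = 3, n = 2, A = 2; (iii) m = 2, n = 4, A = 3; (iv) m = 1, n = 2, and A = 2^l + 1 for some integer l ≥ 0. -/

import Mathlib

open Finset
set_option maxHeartbeats 1000000

namespace Stmt6Aux

lemma dvd_pow_sub_one_iff {p A a : ℕ} (hp : p ≠ 0) (hA : 1 ≤ A) :
    p ∣ A ^ a - 1 ↔ ((A : ZMod p)) ^ a = 1 := by
  haveI : NeZero p := ⟨hp⟩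
  have h1 : 1 ≤ A ^ a := Nat.one_le_pow _ _ hA
  rw [← ZMod.natCast_eq_zero_iff, Nat.cast_sub h1]
  push_cast
  rw [sub_eq_zero]

lemma dvd_pow_add_one_iff {p A a : ℕ} (hp : p ≠ 0) :
    p ∣ A ^ a + 1 ↔ ((A : ZMod p)) ^ a = -1 := by
  haveI : NeZero p := ⟨hp⟩
  rw [← ZMod.natCast_eq_zero_iff]
  push_cast
  rw [add_eq_zero_iff_eq_neg]

-- the key descent lemma
lemma descent {A s r p : ℕ} (hA : 2 ≤ A) (hp : p.Prime) (hr : Odd r)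
    (h1 : p ∣ A ^ (r * s) + 1) (h2 : p ∣ A ^ (2 * s) - 1) : p ∣ A ^ s + 1 := by
  rcases Nat.eq_zero_or_pos s with rfl | hs
  · simpa using h1
  rcases eq_or_ne p 2 with rfl | hp2
  · have hrs : r * s ≠ 0 := by
      have := hr.pos
      positivity
    have hAodd : ¬ 2 ∣ A := by
      intro h2A
      have : 2 ∣ A ^ (r * s) := dvd_pow h2A hrs
      omega
    have : ¬ 2 ∣ A ^ s := fun h => hAodd (Nat.Prime.dvd_of_dvd_pow Nat.prime_two h)
    omega
  · haveI : Fact p.Prime := ⟨hp⟩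
    have hp0 : p ≠ 0 := hp.ne_zero
    have hx2 : ((A : ZMod p)) ^ (2 * s) = 1 := (dvd_pow_sub_one_iff hp0 (by omega)).mp h2
    have hx1 : ((A : ZMod p)) ^ (r * s) = -1 := (dvd_pow_add_one_iff hp0).mp h1
    have hsq : ((A : ZMod p)) ^ s * ((A : ZMod p)) ^ s = 1 := by
      rw [← pow_add] at *
      rw [show s + s = 2 * s by ring]
      exact hx2
    rcases mul_self_eq_one_iff.mp hsq with h | h
    · exfalso
      have : ((A : ZMod p)) ^ (r * s) = 1 := by
        rw [mul_comm, pow_mul, h, one_pow]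
      rw [hx1] at this
      have h20 : (2 : ZMod p) = 0 := by
        have := this
        linear_combination -this
      have : p ∣ 2 := by
        have : ((2 : ℕ) : ZMod p) = 0 := by push_cast; exact h20
        exact (ZMod.natCast_eq_zero_iff _ _).mp this
      exact hp2 ((Nat.prime_dvd_prime_iff_eq hp Nat.prime_two).mp this)
    · exact (dvd_pow_add_one_iff hp0).mpr h

lemma geom_nat {B : ℕ} (hB : 1 ≤ B) (j : ℕ) :
    (∑ i ∈ range j, B ^ i) * (B - 1) = B ^ j - 1 := by
  have h := geom_sum_mul (B : ℤ) j
  have h1 : 1 ≤ B ^ j := Nat.one_le_pow _ _ hB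
  zify [hB, h1]
  push_cast at h
  exact h

lemma sum_ge {B j : ℕ} (hj : 1 ≤ j) : B ^ (j - 1) ≤ ∑ i ∈ range j, B ^ i :=
  Finset.single_le_sum (fun i _ => Nat.zero_le _) (Finset.mem_range.mpr (by omega))

lemma sum_parity {B j : ℕ} (hB : ¬ 2 ∣ B) (hj : ¬ 2 ∣ j) :
    ¬ 2 ∣ ∑ i ∈ range j, B ^ i := by
  intro h
  have h1 : ((∑ i ∈ range j, B ^ i : ℕ) : ZMod 2) = 0 := by
    rw [ZMod.natCast_eq_zero_iff]; exact h
  have hB1 : (B : ZMod 2) = 1 := by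
    have h0 : (B : ZMod 2) ≠ 0 := fun h0 => hB ((ZMod.natCast_eq_zero_iff _ _).mp h0)
    revert h0
    have : ∀ z : ZMod 2, z ≠ 0 → z = 1 := by decide
    exact this _
  push_cast at h1
  rw [hB1] at h1
  simp at h1
  exact hj ((ZMod.natCast_eq_zero_iff _ _).mp h1)

lemma lt_three_pow (j : ℕ) (h : 2 ≤ j) : j < 3 ^ (j - 1) := by
  induction j with
  | zero => omega
  | succ k ih =>
    rcases Nat.lt_or_ge k 2 with hk | hk
    · interval_cases k <;> first | omega | norm_num
    · have := ih (by omega)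
      have h2 : 3 ^ (k - 1) + 1 ≤ 3 ^ k := by
        have : 3 ^ (k - 1) * 3 ≤ 3 ^ k := by
          rw [← pow_succ]
          exact Nat.pow_le_pow_right (by norm_num) (by omega)
        nlinarith [Nat.one_le_pow (k-1) 3 (by norm_num)]
      simpa using by omega

-- the sigma lemma
lemma sigma_lemma {B j : ℕ} (hB : 3 ≤ B) (hBodd : ¬ 2 ∣ B) (hj : ¬ 2 ∣ j) (hj3 : 3 ≤ j)
    (hdvd : ∀ q : ℕ, q.Prime → q ∣ (B ^ j - 1) → q ∣ B - 1) : False := by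
  set S := ∑ i ∈ range j, B ^ i with hSdef
  have hgeom : S * (B - 1) = B ^ j - 1 := geom_nat (by omega) j
  have hpowle : B ^ (j - 1) ≤ S := sum_ge (by omega)
  have hS0 : S ≠ 0 := by
    have : 1 ≤ B ^ (j-1) := Nat.one_le_pow _ _ (by omega)
    omega
  have hSodd : ¬ 2 ∣ S := sum_parity hBodd hj
  have hSBj : S ∣ B ^ j - 1 := ⟨B - 1, hgeom.symm⟩
  have hBj0 : B ^ j - 1 ≠ 0 := by
    have : B ^ 1 ≤ B ^ j := Nat.pow_le_pow_right (by omega) (by omega)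
    simp only [pow_one] at this
    omega
  have hSdvdj : S ∣ j := by
    rw [Nat.dvd_iff_prime_pow_dvd_dvd]
    intro p k pp hpk
    have ppn : p.Prime := pp
    rcases Nat.eq_zero_or_pos k with rfl | hk
    · simp
    have hpS : p ∣ S := (dvd_pow_self p (by omega)).trans hpk
    have hpB1 : p ∣ B - 1 := hdvd p ppn (hpS.trans hSBj)
    have hpne2 : p ≠ 2 := by rintro rfl; exact hSodd hpS
    have podd : Odd p := ppn.odd_of_ne_two hpne2
    haveI : Fact p.Prime := ⟨ppn⟩
    have hpB : ¬ p ∣ B := by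
      intro h
      have : p ∣ 1 := by
        have := Nat.dvd_sub h hpB1
        rwa [show B - (B - 1) = 1 by omega] at this
      exact ppn.one_lt.ne' (Nat.dvd_one.mp this)
    have hpj : p ∣ j := by
      have hB1 : (B : ZMod p) = 1 := by
        have := (ZMod.natCast_eq_zero_iff (B-1) p).mpr hpB1
        rw [Nat.cast_sub (by omega)] at this
        push_cast at this
        linear_combination this
      have hScast : ((S : ℕ) : ZMod p) = (j : ZMod p) := by
        rw [hSdef]
        push_cast
        rw [hB1]
        simp
      have : ((S : ℕ) : ZMod p) = 0 := (ZMod.natCast_eq_zero_iff _ _).mpr hpS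
      rw [this] at hScast
      exact (ZMod.natCast_eq_zero_iff _ _).mp hScast.symm
    -- LTE
    have hLTE := padicValNat.pow_sub_pow (p := p) podd (x := B) (y := 1)
      (by omega) (by simpa using hpB1) hpB (show j ≠ 0 by omega)
    simp only [one_pow] at hLTE
    have hmul : padicValNat p (S * (B - 1)) = padicValNat p S + padicValNat p (B - 1) :=
      padicValNat.mul hS0 (by omega)
    rw [hgeom] at hmul
    have hval : padicValNat p S = padicValNat p j := by omega
    have hkle : k ≤ padicValNat p S := by
      rw [← Nat.factorization_def S ppn]
      exact (Nat.Prime.pow_dvd_iff_le_factorization ppn hS0).mp hpk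
    calc p ^ k ∣ p ^ (padicValNat p j) := pow_dvd_pow _ (by omega)
      _ ∣ j := pow_padicValNat_dvd
  have hSlej : S ≤ j := Nat.le_of_dvd (by omega) hSdvdj
  have h3 : 3 ^ (j-1) ≤ B ^ (j-1) := Nat.pow_le_pow_left hB _
  have := lt_three_pow j (by omega)
  omega

lemma pow_sub_one_dvd {A a k : ℕ} : A ^ a - 1 ∣ A ^ (a * k) - 1 := by
  have := Nat.sub_dvd_pow_sub_pow (A ^ a) 1 k
  simpa [← pow_mul] using this

lemma pow_two_m_sub_one {A m : ℕ} : A ^ (2 * m) - 1 = (A ^ m + 1) * (A ^ m - 1) := by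
  rw [mul_comm 2 m, pow_mul]
  simpa using Nat.sq_sub_sq (A ^ m) 1

lemma alt_geom {x : ℤ} {r : ℕ} (hr : Odd r) :
    (∑ i ∈ range r, (-x) ^ i) * (x + 1) = x ^ r + 1 := by
  have h := geom_sum_mul (-x) r
  have h2 : (-x) ^ r = -(x ^ r) := Odd.neg_pow hr x
  calc (∑ i ∈ range r, (-x) ^ i) * (x + 1)
      = -((∑ i ∈ range r, (-x) ^ i) * (-x - 1)) := by ring
    _ = -((-x) ^ r - 1) := by rw [h]
    _ = x ^ r + 1 := by rw [h2]; ring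

lemma one_add_pow_of_sq_zero {R : Type*} [CommRing R] {z : R} (h : z * z = 0) :
    ∀ i : ℕ, (1 + z) ^ i = 1 + (i : R) * z := by
  intro i
  induction i with
  | zero => simp
  | succ k ih =>
    calc (1 + z) ^ (k+1) = (1 + (k:R) * z) * (1 + z) := by rw [pow_succ, ih]
      _ = 1 + ((k:R) + 1) * z + (k:R) * (z * z) := by ring
      _ = 1 + ((k+1 : ℕ) : R) * z := by rw [h]; push_cast; ring

lemma eq_pow_of_all_primes {x p : ℕ} (hx : x ≠ 0)
    (h : ∀ q, q.Prime → q ∣ x → q = p) : ∃ k, x = p ^ k :=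
  ⟨_, Nat.eq_prime_pow_of_unique_prime_dvd hx (fun hq hd => h _ hq hd)⟩

lemma pow2_add_two {a b : ℕ} (h : 2 ^ b = 2 ^ a + 2) : a = 1 ∧ b = 2 := by
  match a, b with
  | 0, b =>
    exfalso
    match b with
    | 0 => omega
    | b+1 =>
      have : (2:ℕ) ∣ 2 ^ (b+1) := dvd_pow_self 2 (by omega)
      omega
  | 1, b =>
    have hb : 2 ^ b = 2 ^ 2 := by norm_num at h ⊢; omega
    exact ⟨rfl, Nat.pow_right_injective (le_refl 2) hb⟩
  | (a+2), b =>
    exfalso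
    have h4a : (4:ℕ) ∣ 2 ^ (a+2) := ⟨2 ^ a, by ring⟩
    have hge : (4:ℕ) ≤ 2 ^ (a+2) := Nat.le_of_dvd (by positivity) h4a
    have hb2 : 3 ≤ b := by
      by_contra hb
      interval_cases b <;> omega
    have h4b : (4:ℕ) ∣ 2 ^ b := by
      have : (2:ℕ)^2 ∣ 2 ^ b := pow_dvd_pow 2 (by omega)
      simpa using this
    omega

lemma two_mul_le_pow {r : ℕ} (h : 5 ≤ r) : 2 * r ≤ 2 ^ (r - 1) := by
  induction r with
  | zero => omega
  | succ k ih =>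
    rcases Nat.lt_or_ge k 5 with hk | hk
    · interval_cases k <;> first | omega | norm_num
    · have := ih (by omega)
      have h2 : 2 ^ (k - 1) * 2 ≤ 2 ^ k := by
        rw [← pow_succ]
        exact Nat.pow_le_pow_right (by norm_num) (by omega)
      have : 2 ^ (k-1) ≥ 2 := by
        calc 2 = 2^1 := by norm_num
        _ ≤ 2 ^ (k-1) := Nat.pow_le_pow_right (by norm_num) (by omega)
      simp only [Nat.add_sub_cancel]
      omega

lemma fact1 {A m n : ℕ} (hA : 2 ≤ A) (hm : 1 ≤ m) (hn : 1 ≤ n)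
    (p0 : ℕ) (hp0 : p0.Prime) (hp0ne : p0 ≠ 2) (hp0d : p0 ∣ A ^ m + 1)
    (hex : ¬(A = 2 ∧ m = 3))
    (hdvd : ∀ p : ℕ, p.Prime → p ∣ A ^ m + 1 → p ∣ A ^ n - 1) :
    2 * m ∣ n := by
  by_contra hcon
  set g := Nat.gcd (2 * m) n with hg
  have hgdvd2m : g ∣ 2 * m := Nat.gcd_dvd_left _ _
  have hgdvdn : g ∣ n := Nat.gcd_dvd_right _ _
  have hgne : g ≠ 2 * m := fun h => hcon (h ▸ hgdvdn)
  have hgpos : 0 < g := by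
    rcases Nat.eq_zero_or_pos g with h0 | h
    · exfalso
      have := Nat.gcd_eq_zero_iff.mp (hg ▸ h0)
      omega
    · exact h
  have hAm1 : 1 ≤ A ^ m := Nat.one_le_pow _ _ (by omega)
  have hkey : ∀ p : ℕ, p.Prime → p ∣ A ^ m + 1 → p ∣ A ^ g - 1 := by
    intro p pp hpd
    have h2m : p ∣ A ^ (2 * m) - 1 := by
      rw [pow_two_m_sub_one]
      exact hpd.mul_right _
    have hx2m : ((A : ZMod p)) ^ (2 * m) = 1 := (dvd_pow_sub_one_iff pp.ne_zero (by omega)).mp h2m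
    have hxn : ((A : ZMod p)) ^ n = 1 := (dvd_pow_sub_one_iff pp.ne_zero (by omega)).mp (hdvd p pp hpd)
    exact (dvd_pow_sub_one_iff pp.ne_zero (by omega)).mpr (pow_gcd_eq_one.mpr ⟨hx2m, hxn⟩)
  obtain ⟨u, hu⟩ := hgdvd2m
  have hu1 : u ≠ 1 := by rintro rfl; omega
  have hu0 : u ≠ 0 := by rintro rfl; omega
  obtain ⟨r, hr, hrd⟩ := Nat.exists_prime_and_dvd hu1
  obtain ⟨w, hw⟩ := hrd
  have hgd : A ^ g - 1 ∣ A ^ (g * w) - 1 := pow_sub_one_dvd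
  rcases eq_or_ne r 2 with rfl | hrne
  · -- r = 2
    have hm' : m = g * w := by
      have h2 : 2 * m = 2 * (g * w) := by rw [hu, hw]; ring
      omega
    have hd1 : p0 ∣ A ^ m - 1 := hm' ▸ ((hkey p0 hp0 hp0d).trans hgd)
    have h2' : p0 ∣ 2 := by
      have := Nat.dvd_sub hp0d hd1
      rwa [show A ^ m + 1 - (A ^ m - 1) = 2 by omega] at this
    exact hp0ne ((Nat.prime_dvd_prime_iff_eq hp0 Nat.prime_two).mp h2')
  · -- r odd
    have hrodd : Odd r := hr.odd_of_ne_two hrne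
    have hr3 : 3 ≤ r := by
      have h2 := hr.two_le
      have h3 := Nat.odd_iff.mp hrodd
      omega
    have hrm : r ∣ m := by
      have hr2m : r ∣ 2 * m := ⟨g * w, by rw [hu, hw]; ring⟩
      rcases (Nat.Prime.dvd_mul hr).mp hr2m with h | h
      · exact absurd ((Nat.prime_dvd_prime_iff_eq hr Nat.prime_two).mp h) hrne
      · exact h
    obtain ⟨s, hs⟩ := hrm
    have hs1 : 1 ≤ s := by
      rcases Nat.eq_zero_or_pos s with rfl | h
      · omega
      · exact h
    have hAs1 : 1 ≤ A ^ s := Nat.one_le_pow _ _ (by omega)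
    have h2s : g * w = 2 * s := by
      have h1 : r * (g * w) = r * (2 * s) := by
        calc r * (g * w) = g * u := by rw [hw]; ring
        _ = 2 * m := hu.symm
        _ = r * (2 * s) := by rw [hs]; ring
      exact Nat.eq_of_mul_eq_mul_left (by omega) h1
    have hall : ∀ p : ℕ, p.Prime → p ∣ A ^ m + 1 → p ∣ A ^ s + 1 := by
      intro p pp hpd
      have hm1 : p ∣ A ^ (r * s) + 1 := by rw [← hs]; exact hpd
      have hg2 : p ∣ A ^ (2 * s) - 1 := by
        have := (hkey p pp hpd).trans hgd
        rwa [h2s] at this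
      exact descent hA pp hrodd hm1 hg2
    -- Q part
    set x : ℤ := (A : ℤ) ^ s with hxdef
    set Q : ℤ := ∑ i ∈ range r, (-x) ^ i with hQdef
    have hQeq : Q * (x + 1) = x ^ r + 1 := alt_geom hrodd
    have hxr : x ^ r = (A : ℤ) ^ m := by
      rw [hxdef, ← pow_mul, mul_comm s r, ← hs]
    have hxpos : (0:ℤ) < x + 1 := by positivity
    have hQpos : 0 < Q := by
      have hmulpos : 0 < Q * (x + 1) := by
        rw [hQeq, hxr]
        positivity
      rcases mul_pos_iff.mp hmulpos with ⟨h, _⟩ | ⟨_, h⟩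
      · exact h
      · linarith
    set QN : ℕ := Q.toNat with hQNdef
    have hQcast : (QN : ℤ) = Q := Int.toNat_of_nonneg hQpos.le
    have hQNmul : QN * (A ^ s + 1) = A ^ m + 1 := by
      have h := hQeq
      rw [hxr] at h
      have h2 : ((QN * (A ^ s + 1) : ℕ) : ℤ) = ((A ^ m + 1 : ℕ) : ℤ) := by
        push_cast
        rw [hQcast, ← hxdef]
        exact h
      exact_mod_cast h2
    have hQNdvd : QN ∣ A ^ m + 1 := ⟨A ^ s + 1, hQNmul.symm⟩
    have hQN1 : 1 < QN := by
      have hsm : s < m := by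
        have h3 : 3 * s ≤ r * s := Nat.mul_le_mul_right s hr3
        omega
      have hlt : A ^ s < A ^ m := Nat.pow_lt_pow_right hA hsm
      by_contra hc
      push_neg at hc
      interval_cases QN <;> omega
    have hrQN : ∀ q : ℕ, q.Prime → q ∣ QN → q = r := by
      intro q hq hqQ
      have hqm : q ∣ A ^ m + 1 := hqQ.trans hQNdvd
      have hqs : q ∣ A ^ s + 1 := hall q hq hqm
      have hx1 : ((A : ZMod q)) ^ s = -1 := (dvd_pow_add_one_iff hq.ne_zero).mp hqs
      haveI : NeZero q := ⟨hq.ne_zero⟩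
      have hQ0 : ((QN : ℕ) : ZMod q) = 0 := (ZMod.natCast_eq_zero_iff _ _).mpr hqQ
      have hQr : ((QN : ℕ) : ZMod q) = (r : ZMod q) := by
        have h1 : ((QN : ℤ) : ZMod q) = ((Q : ℤ) : ZMod q) := by rw [hQcast]
        simp only [hQdef, hxdef] at h1
        push_cast at h1
        rw [hx1] at h1
        simpa using h1
      rw [hQ0] at hQr
      have : q ∣ r := (ZMod.natCast_eq_zero_iff _ _).mp hQr.symm
      exact (Nat.prime_dvd_prime_iff_eq hq hr).mp this
    obtain ⟨e, he⟩ := eq_pow_of_all_primes (show QN ≠ 0 by omega) hrQN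
    have he1 : 1 ≤ e := by
      rcases Nat.eq_zero_or_pos e with rfl | h
      · simp at he; omega
      · exact h
    have hrQNd : r ∣ QN := he ▸ dvd_pow_self r (by omega)
    have hrAs : r ∣ A ^ s + 1 := hall r hr (hrQNd.trans hQNdvd)
    obtain ⟨c, hc⟩ := hrAs
    have hr2 : ¬ (r ^ 2 ∣ QN) := by
      intro hdvd2
      haveI : NeZero (r ^ 2) := ⟨by positivity⟩
      have hrr : ((r : ZMod (r^2)) * (r : ZMod (r^2))) = 0 := by
        have h0 : (((r^2 : ℕ)) : ZMod (r^2)) = 0 := ZMod.natCast_self _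
        push_cast at h0
        linear_combination h0
      have hAx : -((A : ZMod (r^2)) ^ s) = 1 + (-((r : ZMod (r^2)) * (c : ZMod (r^2)))) := by
        have h0 : ((A ^ s + 1 : ℕ) : ZMod (r^2)) = (r : ZMod (r^2)) * c := by
          rw [hc]
          push_cast
          ring
        push_cast at h0
        linear_combination -h0
      have htt : (-((r : ZMod (r^2)) * (c : ZMod (r^2)))) * (-((r : ZMod (r^2)) * (c : ZMod (r^2)))) = 0 := by
        linear_combination ((c : ZMod (r^2)) * (c : ZMod (r^2))) * hrr
      have hQcomp : ((QN : ℕ) : ZMod (r^2)) = (r : ZMod (r^2)) := by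
        have h1 : ((QN : ℤ) : ZMod (r^2)) = ((Q : ℤ) : ZMod (r^2)) := by rw [hQcast]
        simp only [hQdef, hxdef] at h1
        push_cast at h1
        rw [hAx] at h1
        rw [Finset.sum_congr rfl (fun i _ => one_add_pow_of_sq_zero htt i)] at h1
        rw [Finset.sum_add_distrib, ← Finset.sum_mul] at h1
        have hsum : (∑ i ∈ range r, (i : ZMod (r^2))) = ((r * ((r-1)/2) : ℕ) : ZMod (r^2)) := by
          rw [← Nat.cast_sum]
          congr 1
          rw [Finset.sum_range_id]
          rw [Nat.mul_div_assoc r (by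
            have := Nat.odd_iff.mp hrodd
            omega : 2 ∣ r - 1)]
        rw [hsum] at h1
        have hz : ((r * ((r-1)/2) : ℕ) : ZMod (r^2)) * (-((r : ZMod (r^2)) * (c : ZMod (r^2)))) = 0 := by
          push_cast
          linear_combination (-(((r-1)/2 : ℕ) : ZMod (r^2)) * (c : ZMod (r^2))) * hrr
        rw [hz] at h1
        simpa using h1
      have hQ0 : ((QN : ℕ) : ZMod (r^2)) = 0 := (ZMod.natCast_eq_zero_iff _ _).mpr hdvd2
      rw [hQ0] at hQcomp
      have hdr : r^2 ∣ r := (ZMod.natCast_eq_zero_iff _ _).mp hQcomp.symm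
      have := Nat.le_of_dvd (by omega) hdr
      nlinarith
    have he2 : e = 1 := by
      by_contra hce
      exact hr2 (he ▸ pow_dvd_pow r (by omega))
    have hQNr : QN = r := by rw [he, he2, pow_one]
    have hsz : r * (A ^ s + 1) = A ^ m + 1 := by rw [← hQNmul, hQNr]
    have hAs2 : 2 ≤ A ^ s := by
      calc 2 ≤ A := hA
      _ = A^1 := (pow_one A).symm
      _ ≤ A ^ s := Nat.pow_le_pow_right (by omega) hs1
    have hbig : 2 * r ≤ A ^ (s * (r - 1)) := by
      rcases eq_or_ne r 3 with rfl | hr3'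
      · rcases Nat.lt_or_ge s 2 with hs2 | hs2
        · have hseq : s = 1 := by omega
          subst hseq
          have hA3 : 3 ≤ A := by
            rcases Nat.lt_or_ge A 3 with h | h
            · exfalso
              exact hex ⟨by omega, by rw [hs]⟩
            · exact h
          calc 2*3 ≤ 3^(1*(3-1)) := by norm_num
          _ ≤ A ^ (1*(3-1)) := Nat.pow_le_pow_left hA3 _
        · calc 2*3 ≤ 2^4 := by norm_num
          _ ≤ 2 ^ (s * (3-1)) := Nat.pow_le_pow_right (by norm_num) (by omega)
          _ ≤ A ^ (s * (3-1)) := Nat.pow_le_pow_left hA _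
      · have hr5 : 5 ≤ r := by
          have := Nat.odd_iff.mp hrodd
          omega
        calc 2 * r ≤ 2 ^ (r - 1) := two_mul_le_pow hr5
        _ ≤ 2 ^ (s * (r-1)) := Nat.pow_le_pow_right (by norm_num) (Nat.le_mul_of_pos_left (r-1) hs1)
        _ ≤ A ^ (s * (r-1)) := Nat.pow_le_pow_left hA _
    have hAmsplit : A ^ m = A ^ (s * (r-1)) * A ^ s := by
      rw [← pow_add]
      congr 1
      obtain ⟨d, rfl⟩ : ∃ d, r = d + 3 := ⟨r - 3, by omega⟩
      rw [hs]
      have : d + 3 - 1 = d + 2 := by omega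
      rw [this]
      ring
    have hfin : r * (A ^ s + 1) < A ^ m + 1 := by
      have h1 : (2 * r) * A ^ s ≤ A ^ (s*(r-1)) * A ^ s := Nat.mul_le_mul_right _ hbig
      have h2 : r < r * A ^ s := by
        have := Nat.mul_le_mul_left r hAs2
        omega
      rw [show (2 * r) * A ^ s = 2 * (r * A ^ s) by ring] at h1
      rw [hAmsplit, show r * (A ^ s + 1) = r * A ^ s + r by ring]
      omega
    exact absurd hsz hfin.ne

lemma n_eq_two_23 {n : ℕ} (hn : 1 ≤ n) (h3 : 3 ∣ 2 ^ n - 1)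
    (hall : ∀ q : ℕ, q.Prime → q ∣ 2 ^ n - 1 → q = 3) : n = 2 := by
  have h2n : 2 ≤ 2 ^ n := by
    calc 2 = 2^1 := by norm_num
    _ ≤ 2 ^ n := Nat.pow_le_pow_right (by norm_num) hn
  obtain ⟨a, ha⟩ := eq_pow_of_all_primes (x := 2^n - 1) (by omega) hall
  have hneven : 2 ∣ n := by
    by_contra hodd
    have hno : Odd n := Nat.odd_iff.mpr (by omega)
    have h1 : ((2 : ℕ) : ZMod 3) ^ n = 1 := (dvd_pow_sub_one_iff (by norm_num) (by norm_num)).mp h3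
    have h2 : ((2 : ℕ) : ZMod 3) = -1 := by decide
    rw [h2, hno.neg_one_pow] at h1
    exact absurd h1 (by decide)
  obtain ⟨n', rfl⟩ := hneven
  have hn'1 : 1 ≤ n' := by omega
  have h2n' : 2 ≤ 2 ^ n' := by
    calc 2 = 2^1 := by norm_num
    _ ≤ 2 ^ n' := Nat.pow_le_pow_right (by norm_num) hn'1
  have hfac : (2 ^ n' + 1) * (2 ^ n' - 1) = 3 ^ a := by
    rw [← pow_two_m_sub_one, ← ha]
  obtain ⟨c, hcle, hceq⟩ := (Nat.dvd_prime_pow Nat.prime_three).mp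
    (Dvd.intro_left _ hfac)
  obtain ⟨d, hdle, hdeq⟩ := (Nat.dvd_prime_pow Nat.prime_three).mp
    (Dvd.intro _ hfac)
  have hd1 : 1 ≤ d := by
    by_contra hd
    have : d = 0 := by omega
    rw [this, pow_zero] at hdeq
    omega
  have hc0 : c = 0 := by
    by_contra hc
    have h3c : 3 ∣ 2 ^ n' - 1 := by rw [hceq]; exact dvd_pow_self 3 (by omega)
    have h3d : 3 ∣ 2 ^ n' + 1 := by rw [hdeq]; exact dvd_pow_self 3 (by omega)
    have := Nat.dvd_sub h3d h3c
    rw [show 2 ^ n' + 1 - (2 ^ n' - 1) = 2 by omega] at this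
    omega
  rw [hc0, pow_zero] at hceq
  have : 2 ^ n' = 2 ^ 1 := by omega
  have := Nat.pow_right_injective (le_refl 2) this
  omega

end Stmt6Aux

open Stmt6Aux in
theorem stmt6 (A m n : ℕ) (hA : 1 < A) (hm : 1 ≤ m) (hn : 1 ≤ n) :
    (A ^ m + 1).primeFactors = (A ^ n - 1).primeFactors ↔
      (m = 1 ∧ n = 1 ∧ A = 3) ∨
      (m = 3 ∧ n = 2 ∧ A = 2) ∨
      (m = 2 ∧ n = 4 ∧ A = 3) ∨
      (m = 1 ∧ n = 2 ∧ ∃ l : ℕ, A = 2 ^ l + 1) := by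
  constructor
  · intro h
    have hA2 : 2 ≤ A := hA
    have hAm0 : A ^ m + 1 ≠ 0 := by positivity
    have hAmge2 : 2 ≤ A ^ m := by
      calc 2 ≤ A := hA2
      _ ≤ A ^ m := Nat.le_self_pow (by omega) A
    have hAn2 : 2 ≤ A ^ n := by
      calc 2 ≤ A := hA2
      _ ≤ A ^ n := Nat.le_self_pow (by omega) A
    have hAn0 : A ^ n - 1 ≠ 0 := by omega
    have hto : ∀ p : ℕ, p.Prime → p ∣ A ^ m + 1 → p ∣ A ^ n - 1 := by
      intro p pp hd
      have hmem : p ∈ (A ^ m + 1).primeFactors := Nat.mem_primeFactors.mpr ⟨pp, hd, hAm0⟩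
      rw [h] at hmem
      exact (Nat.mem_primeFactors.mp hmem).2.1
    have hfrom : ∀ p : ℕ, p.Prime → p ∣ A ^ n - 1 → p ∣ A ^ m + 1 := by
      intro p pp hd
      have hmem : p ∈ (A ^ n - 1).primeFactors := Nat.mem_primeFactors.mpr ⟨pp, hd, hAn0⟩
      rw [← h] at hmem
      exact (Nat.mem_primeFactors.mp hmem).2.1
    by_cases hP : ∀ p : ℕ, p.Prime → p ∣ A ^ m + 1 → p = 2
    · -- all prime factors of A^m+1 are 2
      have hAodd : ¬ 2 ∣ A := by
        intro h2A
        obtain ⟨q, hq, hqd⟩ := Nat.exists_prime_and_dvd (show A ^ m + 1 ≠ 1 by omega)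
        have hq2 : q = 2 := hP q hq hqd
        subst hq2
        have : 2 ∣ A ^ m := dvd_pow h2A (by omega)
        omega
      have hA3 : 3 ≤ A := by omega
      have hm1 : m = 1 := by
        by_contra hm1
        rcases Nat.even_or_odd m with hme | hmo
        · obtain ⟨k, hk⟩ := eq_pow_of_all_primes hAm0 hP
          obtain ⟨m', rfl⟩ := hme
          have hm'1 : 1 ≤ m' := by omega
          obtain ⟨t, ht⟩ : ∃ t, A = 2 * t + 1 := ⟨A / 2, by omega⟩
          have h8 : 8 ∣ A ^ 2 - 1 := by
            have hsq : A ^ 2 = 4 * (t * (t + 1)) + 1 := by subst ht; ring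
            have h2t : 2 ∣ t * (t + 1) := (Nat.even_mul_succ_self t).two_dvd
            obtain ⟨u, hu⟩ := h2t
            exact ⟨u, by omega⟩
          have h8m : 8 ∣ A ^ (m' + m') - 1 := by
            refine h8.trans ?_
            have := pow_sub_one_dvd (A := A) (a := 2) (k := m')
            rwa [show 2 * m' = m' + m' by ring] at this
          have h9 : 9 ≤ A ^ (m' + m') := by
            calc 9 = 3 ^ 2 := by norm_num
            _ ≤ A ^ 2 := Nat.pow_le_pow_left hA3 2
            _ ≤ A ^ (m' + m') := Nat.pow_le_pow_right (by omega) (by omega)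
          have hk3 : 3 ≤ k := by
            by_contra hkc
            interval_cases k <;> omega
          have h8k : (8 : ℕ) ∣ 2 ^ k := by
            have : (2 : ℕ) ^ 3 ∣ 2 ^ k := pow_dvd_pow 2 hk3
            simpa using this
          omega
        · have hm3 : 3 ≤ m := by
            have := Nat.odd_iff.mp hmo
            omega
          set T : ℤ := ∑ i ∈ range m, (-(A : ℤ)) ^ i with hT
          have hTeq : T * ((A : ℤ) + 1) = (A : ℤ) ^ m + 1 := by
            simpa using alt_geom (x := (A : ℤ)) hmo
          have hTpos : 0 < T := by
            have hmulpos : 0 < T * ((A : ℤ) + 1) := by rw [hTeq]; positivity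
            rcases mul_pos_iff.mp hmulpos with ⟨h1, _⟩ | ⟨_, h2⟩
            · exact h1
            · exfalso
              have : (0:ℤ) < (A:ℤ) + 1 := by positivity
              linarith
          set TN : ℕ := T.toNat with hTN
          have hTcast : (TN : ℤ) = T := Int.toNat_of_nonneg hTpos.le
          have hTmul : TN * (A + 1) = A ^ m + 1 := by
            have h2 : ((TN * (A + 1) : ℕ) : ℤ) = ((A ^ m + 1 : ℕ) : ℤ) := by
              push_cast
              rw [hTcast]
              exact hTeq
            exact_mod_cast h2
          have hTdvd : TN ∣ A ^ m + 1 := ⟨A + 1, hTmul.symm⟩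
          have hTN1 : TN ≠ 1 := by
            intro h1
            rw [h1, one_mul] at hTmul
            have hle : A ^ 3 ≤ A ^ m := Nat.pow_le_pow_right (by omega) hm3
            have h9 : A * A * A ≤ A := by
              calc A * A * A = A ^ 3 := by ring
              _ ≤ A ^ m := hle
              _ = A := by omega
            nlinarith [h9, hA3]
          have hTN0 : TN ≠ 0 := by
            intro h0
            rw [h0, zero_mul] at hTmul
            omega
          obtain ⟨q, hq, hqd⟩ := Nat.exists_prime_and_dvd hTN1
          have hq2 : q = 2 := hP q hq (hqd.trans hTdvd)
          subst hq2
          -- but TN is odd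
          have hA1 : ((A : ℕ) : ZMod 2) = 1 := by
            have h0 : ((A : ℕ) : ZMod 2) ≠ 0 :=
              fun h0 => hAodd ((ZMod.natCast_eq_zero_iff _ _).mp h0)
            revert h0
            have : ∀ z : ZMod 2, z ≠ 0 → z = 1 := by decide
            exact this _
          have hcomp : ((TN : ℕ) : ZMod 2) = (m : ZMod 2) := by
            have h1 : ((TN : ℤ) : ZMod 2) = ((T : ℤ) : ZMod 2) := by rw [hTcast]
            simp only [hT] at h1
            push_cast at h1
            rw [hA1] at h1
            rw [show (-1 : ZMod 2) = 1 by decide] at h1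
            simpa using h1
          have hTN2 : ((TN : ℕ) : ZMod 2) = 0 := (ZMod.natCast_eq_zero_iff _ _).mpr hqd
          rw [hTN2] at hcomp
          have : (2:ℕ) ∣ m := (ZMod.natCast_eq_zero_iff _ _).mp hcomp.symm
          have := Nat.odd_iff.mp hmo
          omega
      subst hm1
      obtain ⟨k, hk⟩ := eq_pow_of_all_primes hAm0 hP
      rw [pow_one] at hk
      have hk2 : 2 ≤ k := by
        by_contra hkc
        interval_cases k <;> omega
      have hallq : ∀ q : ℕ, q.Prime → q ∣ A ^ n - 1 → q = 2 := by
        intro q hq hqd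
        have hx := hfrom q hq hqd
        rw [pow_one, hk] at hx
        exact (Nat.prime_dvd_prime_iff_eq hq Nat.prime_two).mp (hq.dvd_of_dvd_pow hx)
      obtain ⟨j, hj⟩ := eq_pow_of_all_primes hAn0 hallq
      have hj1 : 1 ≤ j := by
        by_contra hjc
        have hj0 : j = 0 := by omega
        rw [hj0, pow_zero] at hj
        have hA3n : 3 ≤ A ^ n := le_trans hA3 (Nat.le_self_pow (by omega) A)
        omega
      rcases Nat.even_or_odd n with hne | hno
      · obtain ⟨n', rfl⟩ := hne
        have hn'1 : 1 ≤ n' := by omega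
        have hAn'3 : 3 ≤ A ^ n' := by
          calc 3 ≤ A := hA3
          _ ≤ A ^ n' := Nat.le_self_pow (by omega) A
        have hfac : (A ^ n' + 1) * (A ^ n' - 1) = 2 ^ j := by
          rw [← pow_two_m_sub_one, show 2 * n' = n' + n' by ring, ← hj]
        obtain ⟨a, hale, haeq⟩ := (Nat.dvd_prime_pow Nat.prime_two).mp
          (Dvd.intro_left _ hfac)
        obtain ⟨b, hble, hbeq⟩ := (Nat.dvd_prime_pow Nat.prime_two).mp
          (Dvd.intro _ hfac)
        have hab : 2 ^ b = 2 ^ a + 2 := by omega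
        obtain ⟨ha1, hb2⟩ := pow2_add_two hab
        have hAn'eq : A ^ n' = 3 := by
          rw [ha1] at haeq
          omega
        have hA3' : A = 3 ∧ n' = 1 := by
          rcases Nat.lt_or_ge n' 2 with hlt | hge
          · have : n' = 1 := by omega
            subst this
            rw [pow_one] at hAn'eq
            exact ⟨hAn'eq, rfl⟩
          · exfalso
            have h1 : A ^ 2 ≤ A ^ n' := Nat.pow_le_pow_right (by omega) hge
            have h2 : 9 ≤ A ^ 2 := by nlinarith
            omega
        right; right; right
        exact ⟨rfl, by omega, ⟨1, by omega⟩⟩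
      · rcases eq_or_ne n 1 with rfl | hne1
        · rw [pow_one] at hj
          have h2 : 2 ^ k = 2 ^ j + 2 := by omega
          obtain ⟨hj1', hk2'⟩ := pow2_add_two h2
          rw [hk2'] at hk
          norm_num at hk
          left
          exact ⟨rfl, rfl, by omega⟩
        · exfalso
          have hn3 : 3 ≤ n := by
            have := Nat.odd_iff.mp hno
            omega
          set Sg := ∑ i ∈ range n, A ^ i with hSg
          have hgeom : Sg * (A - 1) = A ^ n - 1 := geom_nat (by omega) n
          have hSdvd : Sg ∣ 2 ^ j := by
            rw [← hj]
            exact ⟨A - 1, hgeom.symm⟩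
          obtain ⟨cexp, hcle, hceq⟩ := (Nat.dvd_prime_pow Nat.prime_two).mp hSdvd
          have hSodd : ¬ 2 ∣ Sg := sum_parity hAodd (by
            have := Nat.odd_iff.mp hno
            omega)
          have hc0 : cexp = 0 := by
            by_contra hcc
            exact hSodd (hceq ▸ dvd_pow_self 2 (by omega))
          rw [hc0, pow_zero] at hceq
          have h1 : A ^ (n - 1) ≤ Sg := sum_ge (by omega)
          have h2 : A ≤ A ^ (n - 1) := Nat.le_self_pow (by omega) A
          omega
    · push_neg at hP
      obtain ⟨p0, hp0, hp0d, hp0ne⟩ := hP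
      by_cases hex : A = 2 ∧ m = 3
      · obtain ⟨rfl, rfl⟩ := hex
        right; left
        refine ⟨rfl, ?_, rfl⟩
        apply n_eq_two_23 hn
        · exact hto 3 (by norm_num) (by norm_num)
        · intro q hq hqd
          have hx := hfrom q hq hqd
          rw [show (2:ℕ)^3 + 1 = 3^2 by norm_num] at hx
          exact (Nat.prime_dvd_prime_iff_eq hq Nat.prime_three).mp (hq.dvd_of_dvd_pow hx)
      · have h2m : 2 * m ∣ n := fact1 hA2 hm hn p0 hp0 hp0ne hp0d hex hto
        have hdvdn : A ^ (2 * m) - 1 ∣ A ^ n - 1 := by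
          obtain ⟨kk, rfl⟩ := h2m
          exact pow_sub_one_dvd
        have hall2 : ∀ q : ℕ, q.Prime → q ∣ A ^ m - 1 → q = 2 := by
          intro q hq hqd
          have hq2m : q ∣ A ^ (2 * m) - 1 := by
            rw [pow_two_m_sub_one]
            exact hqd.mul_left _
          have hqm : q ∣ A ^ m + 1 := hfrom q hq (hq2m.trans hdvdn)
          have hq2 : q ∣ 2 := by
            have := Nat.dvd_sub hqm hqd
            rwa [show A ^ m + 1 - (A ^ m - 1) = 2 by omega] at this
          exact (Nat.prime_dvd_prime_iff_eq hq Nat.prime_two).mp hq2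
        rcases eq_or_ne (A ^ m - 1) 1 with hone | hne1
        · -- A = 2, m = 1
          have hAm2 : A ^ m = 2 := by omega
          have hA2m1 : A = 2 ∧ m = 1 := by
            rcases Nat.lt_or_ge m 2 with hlt | hge
            · have hmeq : m = 1 := by omega
              subst hmeq
              rw [pow_one] at hAm2
              exact ⟨hAm2, rfl⟩
            · exfalso
              have h1 : A ^ 2 ≤ A ^ m := Nat.pow_le_pow_right (by omega) hge
              have h2 : 4 ≤ A ^ 2 := by nlinarith
              omega
          obtain ⟨rfl, rfl⟩ := hA2m1
          right; right; right
          refine ⟨rfl, ?_, ⟨0, by norm_num⟩⟩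
          apply n_eq_two_23 hn
          · exact hto 3 (by norm_num) (by norm_num)
          · intro q hq hqd
            have hx := hfrom q hq hqd
            norm_num at hx
            exact (Nat.prime_dvd_prime_iff_eq hq Nat.prime_three).mp hx
        · obtain ⟨s, hseq⟩ := eq_pow_of_all_primes (show A ^ m - 1 ≠ 0 by omega) hall2
          have hs1 : 1 ≤ s := by
            by_contra hsc
            have : s = 0 := by omega
            rw [this, pow_zero] at hseq
            exact hne1 hseq
          have hAodd : ¬ 2 ∣ A := by
            intro h2A
            have h1 : 2 ∣ A ^ m := dvd_pow h2A (by omega)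
            have h2 : 2 ∣ 2 ^ s := dvd_pow_self 2 (by omega)
            omega
          have hA3 : 3 ≤ A := by omega
          rcases Nat.even_or_odd m with hme | hmo
          · -- m even → A = 3, m = 2
            obtain ⟨m', rfl⟩ := hme
            have hm'1 : 1 ≤ m' := by omega
            have hAm'3 : 3 ≤ A ^ m' := by
              calc 3 ≤ A := hA3
              _ ≤ A ^ m' := Nat.le_self_pow (by omega) A
            have hfac : (A ^ m' + 1) * (A ^ m' - 1) = 2 ^ s := by
              rw [← pow_two_m_sub_one, show 2 * m' = m' + m' by ring, ← hseq]
            obtain ⟨a, hale, haeq⟩ := (Nat.dvd_prime_pow Nat.prime_two).mp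
              (Dvd.intro_left _ hfac)
            obtain ⟨b, hble, hbeq⟩ := (Nat.dvd_prime_pow Nat.prime_two).mp
              (Dvd.intro _ hfac)
            have hab : 2 ^ b = 2 ^ a + 2 := by omega
            obtain ⟨ha1, hb2⟩ := pow2_add_two hab
            have hAm'eq : A ^ m' = 3 := by
              rw [ha1] at haeq
              omega
            have hA3' : A = 3 ∧ m' = 1 := by
              rcases Nat.lt_or_ge m' 2 with hlt | hge
              · have : m' = 1 := by omega
                subst this
                rw [pow_one] at hAm'eq
                exact ⟨hAm'eq, rfl⟩
              · exfalso
                have h1 : A ^ 2 ≤ A ^ m' := Nat.pow_le_pow_right (by omega) hge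
                have h2 : 9 ≤ A ^ 2 := by nlinarith
                omega
            obtain ⟨rfl, rfl⟩ := hA3'
            -- now A = 3, m = 2 (as 1+1); show n = 4
            have h4n : 4 ∣ n := by
              have := h2m
              rwa [show 2 * (1 + 1) = 4 by norm_num] at this
            obtain ⟨kk, hkk⟩ := h4n
            have hkk1 : 1 ≤ kk := by
              rcases Nat.eq_zero_or_pos kk with rfl | h
              · omega
              · exact h
            rcases eq_or_ne kk 1 with rfl | hkkne
            · right; right; left
              exact ⟨by norm_num, by omega, rfl⟩
            · exfalso
              have hkk2 : 2 ≤ kk := by omega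
              rcases Nat.even_or_odd kk with hke | hko
              · obtain ⟨kk', rfl⟩ := hke
                have h8 : (3:ℕ) ^ 8 - 1 ∣ 3 ^ n - 1 := by
                  rw [hkk, show 4 * (kk' + kk') = 8 * kk' by ring]
                  exact pow_sub_one_dvd
                have h41 : (41:ℕ) ∣ 3 ^ n - 1 := by
                  refine dvd_trans ?_ h8
                  norm_num
                have hx := hfrom 41 (by norm_num) h41
                norm_num at hx
              · have hko3 : 3 ≤ kk := by
                  have := Nat.odd_iff.mp hko
                  omega
                apply sigma_lemma (B := 81) (j := kk) (by norm_num) (by norm_num)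
                  (by have := Nat.odd_iff.mp hko; omega) hko3
                intro q hq hqd
                have hqn : q ∣ 3 ^ n - 1 := by
                  rwa [show (81:ℕ) = 3 ^ 4 by norm_num, ← pow_mul, ← hkk] at hqd
                have hx := hfrom q hq hqn
                rw [show (3:ℕ) ^ (1+1) + 1 = 10 by norm_num] at hx
                exact hx.trans (by norm_num)
          · -- m odd → m = 1
            have hm1 : m = 1 := by
              by_contra hm1
              have hm3 : 3 ≤ m := by
                have := Nat.odd_iff.mp hmo
                omega
              set Sg := ∑ i ∈ range m, A ^ i with hSg
              have hgeom : Sg * (A - 1) = A ^ m - 1 := geom_nat (by omega) m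
              have hSdvd : Sg ∣ 2 ^ s := by
                rw [← hseq]
                exact ⟨A - 1, hgeom.symm⟩
              obtain ⟨cexp, hcle, hceq⟩ := (Nat.dvd_prime_pow Nat.prime_two).mp hSdvd
              have hSodd : ¬ 2 ∣ Sg := sum_parity hAodd (by
                have := Nat.odd_iff.mp hmo
                omega)
              have hc0 : cexp = 0 := by
                by_contra hcc
                exact hSodd (hceq ▸ dvd_pow_self 2 (by omega))
              rw [hc0, pow_zero] at hceq
              have h1 : A ^ (m - 1) ≤ Sg := sum_ge (by omega)
              have h2 : A ≤ A ^ (m - 1) := Nat.le_self_pow (by omega) A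
              omega
            subst hm1
            rw [pow_one] at hseq
            have hn2 : n = 2 := by
              obtain ⟨jj, hjj⟩ : ∃ jj, n = 2 * jj := by
                obtain ⟨jj, hj⟩ := h2m
                exact ⟨jj, by omega⟩
              have hjj1 : 1 ≤ jj := by omega
              rcases eq_or_ne jj 1 with rfl | hjne
              · omega
              have hjj2 : 2 ≤ jj := by omega
              exfalso
              rcases Nat.even_or_odd jj with hje | hjo
              · obtain ⟨jj', rfl⟩ := hje
                have hjj'1 : 1 ≤ jj' := by omega
                have h4n : A ^ 4 - 1 ∣ A ^ n - 1 := by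
                  rw [hjj, show 2 * (jj' + jj') = 4 * jj' by ring]
                  exact pow_sub_one_dvd
                have hA21 : 1 ≤ A ^ 2 := Nat.one_le_pow _ _ (by omega)
                have hexq : ¬ ∀ q : ℕ, q.Prime → q ∣ A ^ 2 + 1 → q = 2 := by
                  intro hq2
                  obtain ⟨c2, hc2⟩ := eq_pow_of_all_primes (x := A ^ 2 + 1) (by positivity) hq2
                  have h4 : 4 ∣ A ^ 2 - 1 := by
                    obtain ⟨t, ht⟩ : ∃ t, A = 2 * t + 1 := ⟨A / 2, by omega⟩
                    have hsq : A ^ 2 = 4 * (t * t + t) + 1 := by subst ht; ring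
                    exact ⟨t * t + t, by omega⟩
                  have hge : 10 ≤ A ^ 2 + 1 := by nlinarith
                  have hc22 : 2 ≤ c2 := by
                    by_contra hcc
                    interval_cases c2 <;> omega
                  have h42 : (4:ℕ) ∣ 2 ^ c2 := by
                    have : (2:ℕ) ^ 2 ∣ 2 ^ c2 := pow_dvd_pow 2 hc22
                    simpa using this
                  omega
                push_neg at hexq
                obtain ⟨q, hq, hqd, hqne2⟩ := hexq
                have hqn : q ∣ A ^ n - 1 := by
                  have hq4 : q ∣ A ^ 4 - 1 := by
                    rw [show (4:ℕ) = 2 * 2 by norm_num, pow_two_m_sub_one]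
                    exact hqd.mul_right _
                  exact hq4.trans h4n
                have hqA1 : q ∣ A + 1 := by
                  have := hfrom q hq hqn
                  rwa [pow_one] at this
                have hqA21 : q ∣ A ^ 2 - 1 := by
                  have hsq : A ^ 2 - 1 = (A + 1) * (A - 1) := by
                    simpa using Nat.sq_sub_sq A 1
                  rw [hsq]
                  exact hqA1.mul_right _
                have hq2' : q ∣ 2 := by
                  have := Nat.dvd_sub hqd hqA21
                  rwa [show A ^ 2 + 1 - (A ^ 2 - 1) = 2 by omega] at this
                exact hqne2 ((Nat.prime_dvd_prime_iff_eq hq Nat.prime_two).mp hq2')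
              · have hj3 : 3 ≤ jj := by
                  have := Nat.odd_iff.mp hjo
                  omega
                apply sigma_lemma (B := A ^ 2) (j := jj) (by nlinarith)
                  (fun h2 => hAodd (Nat.Prime.dvd_of_dvd_pow Nat.prime_two h2))
                  (by have := Nat.odd_iff.mp hjo; omega) hj3
                intro q hq hqd
                have hqn : q ∣ A ^ n - 1 := by
                  rwa [← pow_mul, show 2 * jj = n by omega] at hqd
                have hqA1 : q ∣ A + 1 := by
                  have := hfrom q hq hqn
                  rwa [pow_one] at this
                have hsq : A ^ 2 - 1 = (A + 1) * (A - 1) := by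
                  simpa using Nat.sq_sub_sq A 1
                rw [hsq]
                exact hqA1.mul_right _
            right; right; right
            exact ⟨rfl, hn2, ⟨s, by omega⟩⟩
  · rintro (⟨rfl, rfl, rfl⟩ | ⟨rfl, rfl, rfl⟩ | ⟨rfl, rfl, rfl⟩ | ⟨rfl, rfl, l, rfl⟩)
    · rw [show (3:ℕ) ^ 1 + 1 = 2 ^ 2 by norm_num, show (3:ℕ) ^ 1 - 1 = 2 by norm_num]
      exact Nat.primeFactors_pow 2 (by norm_num)
    · rw [show (2:ℕ) ^ 3 + 1 = 3 ^ 2 by norm_num, show (2:ℕ) ^ 2 - 1 = 3 by norm_num]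
      exact Nat.primeFactors_pow 3 (by norm_num)
    · rw [show (3:ℕ) ^ 2 + 1 = 2 * 5 by norm_num, show (3:ℕ) ^ 4 - 1 = 2 ^ 4 * 5 by norm_num]
      rw [Nat.primeFactors_mul (by norm_num) (by norm_num),
        Nat.primeFactors_mul (by norm_num) (by norm_num),
        Nat.primeFactors_pow 2 (by norm_num)]
    · rcases Nat.eq_zero_or_pos l with rfl | hl
      · norm_num
      · have h1 : (2 ^ l + 1) ^ 2 - 1 = 2 ^ l * ((2 ^ l + 1) + 1) := by
          have h2 : (2 ^ l + 1) ^ 2 = 2 ^ l * ((2 ^ l + 1) + 1) + 1 := by ring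
          omega
        rw [pow_one, h1, Nat.primeFactors_mul (by positivity) (by positivity),
          Nat.primeFactors_pow 2 (by omega), Nat.Prime.primeFactors Nat.prime_two]
        have hsub : ({2} : Finset ℕ) ⊆ (2 ^ l + 1 + 1).primeFactors := by
          rw [Finset.singleton_subset_iff]
          refine Nat.mem_primeFactors.mpr ⟨Nat.prime_two, ?_, by omega⟩
          have : (2:ℕ) ∣ 2 ^ l := dvd_pow_self 2 (by omega)
          omega
        exact (Finset.union_eq_right.mpr hsub).symm
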